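/- arXiv:0805.2306 — 2 statements merged into one kernel-verified Lean document; each statement's English description precedes it below -/
import Mathlib

section
/- Let K be a field, S = K[x_1,…,x_n], and let I ⊆ S be a squarefree monomial ideal. Then sdepth(I) = max{ sdepth(D) : D is a squarefree Stanley decomposition of I }, i.e. the Stanley depth of I is attained by a squarefree Stanley decomposition. -/
open MvPolynomial

/-- The Stanley space `u K[Z]`: the `K`-span of all monomials `x^(u+τ)` with
`supp τ ⊆ Z`. -/
noncomputable def StanleySpace (K : Type*) [Field K] {n : ℕ} (u : Fin n →₀ ℕ) (Z : Finset (Fin n)) :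
    Submodule K (MvPolynomial (Fin n) K) :=
  Submodule.span K {p | ∃ τ : Fin n →₀ ℕ, (τ.support : Set (Fin n)) ⊆ Z ∧
    p = monomial (u + τ) (1 : K)}

/-- A Stanley decomposition of a monomial ideal `I`: a finite family of Stanley spaces
`u_i K[Z_i]` with `u_i` a monomial of `I`, whose internal direct sum is `I`
(as a `K`-vector space). -/
structure StanleyDecomposition (K : Type*) [Field K] {n : ℕ}
    (I : Ideal (MvPolynomial (Fin n) K)) where
  r : ℕ
  rpos : 0 < r
  u : Fin r → (Fin n →₀ ℕ)
  Z : Fin r → Finset (Fin n)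
  mem : ∀ i, monomial (u i) (1 : K) ∈ I
  isSup : Submodule.restrictScalars K I = ⨆ i, StanleySpace K (u i) (Z i)
  indep : iSupIndep fun i => StanleySpace K (u i) (Z i)

/-- `sdepth 𝒟 = min_i |Z_i|`. -/
def StanleyDecomposition.sdepth {K : Type*} [Field K] {n : ℕ}
    {I : Ideal (MvPolynomial (Fin n) K)} (D : StanleyDecomposition K I) : ℕ :=
  Finset.univ.inf' ⟨⟨0, D.rpos⟩, Finset.mem_univ _⟩ fun i => (D.Z i).card

/-- The Stanley depth of a monomial ideal: the maximum of `sdepth 𝒟` over all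
Stanley decompositions `𝒟` of `I`. -/
noncomputable def Ideal.sdepth (K : Type*) [Field K] {n : ℕ}
    (I : Ideal (MvPolynomial (Fin n) K)) : ℕ :=
  sSup (Set.range fun D : StanleyDecomposition K I => D.sdepth)

/-- The squarefree exponent vector of `x_F = ∏_{i ∈ F} x_i`. -/
noncomputable def sfVec {n : ℕ} (F : Finset (Fin n)) : Fin n →₀ ℕ :=
  Finsupp.indicator F fun _ _ => 1

/-- A Stanley decomposition is squarefree if each `uᵢ` is squarefree and
`supp uᵢ ⊆ Zᵢ`. -/
def StanleyDecomposition.IsSquarefree {K : Type*} [Field K] {n : ℕ}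
    {I : Ideal (MvPolynomial (Fin n) K)} (D : StanleyDecomposition K I) : Prop :=
  ∀ i, (∀ j, D.u i j ≤ 1) ∧ (D.u i).support ⊆ D.Z i

section Aux
variable {K : Type*} [Field K] {n : ℕ}

/-- The K-span of the monomials with exponents in `E`. -/
noncomputable def MSpan (K : Type*) [Field K] {n : ℕ} (E : Set (Fin n →₀ ℕ)) :
    Submodule K (MvPolynomial (Fin n) K) :=
  Submodule.span K {p | ∃ a ∈ E, p = monomial a (1 : K)}

lemma mem_MSpan {E : Set (Fin n →₀ ℕ)} {p : MvPolynomial (Fin n) K} :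
    p ∈ MSpan K E ↔ ∀ a, coeff a p ≠ 0 → a ∈ E := by
  constructor
  · intro hp
    have : MSpan K E ≤
        { carrier := {q | ∀ a, coeff a q ≠ 0 → a ∈ E}
          add_mem' := by
            intro q r hq hr a ha
            by_cases h : coeff a q ≠ 0
            · exact hq a h
            · push_neg at h
              refine hr a ?_
              simpa [coeff_add, h] using ha
          zero_mem' := by intro a ha; simp at ha
          smul_mem' := by
            intro c q hq a ha
            refine hq a fun h => ha ?_
            simp [smul_eq_C_mul, coeff_C_mul, h] } := by
      refine Submodule.span_le.2 ?_
      rintro q ⟨a, haE, rfl⟩ b hb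
      rw [coeff_monomial] at hb
      split at hb
      · exact ‹a = b› ▸ haE
      · simp at hb
    exact this hp
  · intro h
    rw [p.as_sum]
    refine Submodule.sum_mem _ fun a ha => ?_
    have : (monomial a) (coeff a p) = coeff a p • monomial a (1 : K) := by
      simp [smul_monomial]
    rw [this]
    exact Submodule.smul_mem _ _ (Submodule.subset_span ⟨a, h a (by simpa using ha), rfl⟩)

lemma monomial_mem_MSpan {E : Set (Fin n →₀ ℕ)} {a : Fin n →₀ ℕ} :
    monomial a (1 : K) ∈ MSpan K E ↔ a ∈ E := by
  rw [mem_MSpan]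
  constructor
  · intro h; exact h a (by simp)
  · intro ha b hb
    rw [coeff_monomial] at hb
    split at hb
    · exact ‹a = b› ▸ ha
    · simp at hb

lemma MSpan_iSup {ι : Sort*} (E : ι → Set (Fin n →₀ ℕ)) :
    MSpan K (⋃ i, E i) = ⨆ i, MSpan K (E i) := by
  apply le_antisymm
  · refine Submodule.span_le.2 ?_
    rintro p ⟨a, ha, rfl⟩
    rcases Set.mem_iUnion.1 ha with ⟨i, hi⟩
    exact Submodule.mem_iSup_of_mem i (monomial_mem_MSpan.2 hi)
  · refine iSup_le fun i => Submodule.span_mono ?_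
    rintro p ⟨a, ha, rfl⟩
    exact ⟨a, Set.mem_iUnion.2 ⟨i, ha⟩, rfl⟩

/-- The exponent set of a Stanley space. -/
def SE {n : ℕ} (u : Fin n →₀ ℕ) (Z : Finset (Fin n)) : Set (Fin n →₀ ℕ) :=
  {a | ∃ τ : Fin n →₀ ℕ, (τ.support : Set (Fin n)) ⊆ Z ∧ a = u + τ}

lemma StanleySpace_eq_MSpan (u : Fin n →₀ ℕ) (Z : Finset (Fin n)) :
    StanleySpace K u Z = MSpan K (SE u Z) := by
  unfold StanleySpace MSpan
  congr 1
  ext p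
  constructor
  · rintro ⟨τ, hτ, rfl⟩; exact ⟨u + τ, ⟨τ, hτ, rfl⟩, rfl⟩
  · rintro ⟨a, ⟨τ, hτ, rfl⟩, rfl⟩; exact ⟨τ, hτ, rfl⟩

/-- Exponent set of a squarefree monomial ideal. -/
def EIset {n : ℕ} {m : ℕ} (G : Fin m → Finset (Fin n)) : Set (Fin n →₀ ℕ) :=
  {a | ∃ k, sfVec (G k) ≤ a}

lemma restrictScalars_eq_MSpan {m : ℕ} (G : Fin m → Finset (Fin n))
    (I : Ideal (MvPolynomial (Fin n) K))
    (hI : I = Ideal.span (Set.range fun i => monomial (sfVec (G i)) (1 : K))) :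
    Submodule.restrictScalars K I = MSpan K (EIset G) := by
  apply le_antisymm
  · intro p hp
    rw [mem_MSpan]
    set Jid : Ideal (MvPolynomial (Fin n) K) :=
      { carrier := {q | ∀ a, coeff a q ≠ 0 → a ∈ EIset G}
        add_mem' := by
          intro q r hq hr a ha
          by_cases h : coeff a q ≠ 0
          · exact hq a h
          · push_neg at h
            refine hr a ?_
            simpa [coeff_add, h] using ha
        zero_mem' := by intro a ha; simp at ha
        smul_mem' := by
          intro c q hq a ha
          rw [smul_eq_mul, coeff_mul] at ha
          rcases Finset.exists_ne_zero_of_sum_ne_zero ha with ⟨x, hx, hne⟩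
          have h2 : coeff x.2 q ≠ 0 := fun h => hne (by simp [h])
          rcases hq x.2 h2 with ⟨k, hk⟩
          exact ⟨k, hk.trans (by
            have := Finset.HasAntidiagonal.mem_antidiagonal.1 hx
            calc x.2 ≤ x.1 + x.2 := le_add_self
            _ = a := this)⟩ } with hJ
    have hle : I ≤ Jid := by
      rw [hI, Ideal.span_le]
      rintro q ⟨i, rfl⟩ a ha
      rw [coeff_monomial] at ha
      split at ha
      · exact ‹sfVec (G i) = a› ▸ ⟨i, le_refl _⟩
      · simp at ha
    exact hle hp
  · refine Submodule.span_le.2 ?_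
    rintro p ⟨a, ⟨k, hk⟩, rfl⟩
    have : monomial a (1 : K) = monomial (sfVec (G k)) (1 : K) * monomial (a - sfVec (G k)) 1 := by
      rw [monomial_mul, add_tsub_cancel_of_le hk, one_mul]
    show _ ∈ Submodule.restrictScalars K I
    rw [Submodule.restrictScalars_mem, this]
    exact Ideal.mul_mem_right _ _ (hI ▸ Ideal.subset_span ⟨k, rfl⟩)

lemma sfVec_apply (F : Finset (Fin n)) (j : Fin n) :
    sfVec F j = if j ∈ F then 1 else 0 := by
  classical
  rw [sfVec, Finsupp.indicator_apply]
  split <;> simp_all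

lemma support_sfVec (F : Finset (Fin n)) : (sfVec F).support = F := by
  ext j
  rw [Finsupp.mem_support_iff, sfVec_apply]
  split <;> simp_all

lemma sfVec_le_iff {F : Finset (Fin n)} {a : Fin n →₀ ℕ} :
    sfVec F ≤ a ↔ F ⊆ a.support := by
  rw [Finsupp.le_def]
  constructor
  · intro h j hj
    have := h j
    rw [sfVec_apply, if_pos hj] at this
    rw [Finsupp.mem_support_iff]; omega
  · intro h j
    rw [sfVec_apply]
    split
    · have := h ‹j ∈ F›
      rw [Finsupp.mem_support_iff] at this; omega
    · omega

lemma sfVec_of_squarefree {u : Fin n →₀ ℕ} (h : ∀ j, u j ≤ 1) :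
    sfVec u.support = u := by
  ext j
  rw [sfVec_apply]
  have := h j
  split
  · have := Finsupp.mem_support_iff.1 ‹j ∈ u.support›; omega
  · have : ¬ u j ≠ 0 := fun hf => ‹j ∉ u.support› (Finsupp.mem_support_iff.2 hf)
    omega

lemma mem_SE_sfVec {A Z : Finset (Fin n)} (hAZ : A ⊆ Z) {a : Fin n →₀ ℕ} :
    a ∈ SE (sfVec A) Z ↔ A ⊆ a.support ∧ a.support ⊆ Z := by
  constructor
  · rintro ⟨τ, hτ, rfl⟩
    rw [Finset.coe_subset] at hτ
    constructor
    · intro j hj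
      rw [Finsupp.mem_support_iff, Finsupp.add_apply, sfVec_apply, if_pos hj]
      omega
    · intro j hj
      rw [Finsupp.mem_support_iff, Finsupp.add_apply, sfVec_apply] at hj
      by_cases hA : j ∈ A
      · exact hAZ hA
      · rw [if_neg hA] at hj
        exact hτ (Finsupp.mem_support_iff.2 (by omega))
  · rintro ⟨h1, h2⟩
    have hle : sfVec A ≤ a := sfVec_le_iff.2 h1
    refine ⟨a - sfVec A, ?_, (add_tsub_cancel_of_le hle).symm⟩
    rw [Finset.coe_subset]
    intro j hj
    rw [Finsupp.mem_support_iff, Finsupp.tsub_apply] at hj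
    exact h2 (Finsupp.mem_support_iff.2 (by omega))

lemma sfVec_support_mem_SE {u : Fin n →₀ ℕ} {Z : Finset (Fin n)}
    (hsq : ∀ j, u j ≤ 1) {F : Finset (Fin n)}
    (h1 : u.support ⊆ F) (h2 : F ⊆ u.support ∪ Z) : sfVec F ∈ SE u Z := by
  have hle : u ≤ sfVec F := by
    rw [Finsupp.le_def]
    intro j
    rw [sfVec_apply]
    split
    · exact hsq j
    · have : j ∉ u.support := fun hf => ‹j ∉ F› (h1 hf)
      have := Finsupp.notMem_support_iff.1 this
      omega
  refine ⟨sfVec F - u, ?_, (add_tsub_cancel_of_le hle).symm⟩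
  rw [Finset.coe_subset]
  intro j hj
  rw [Finsupp.mem_support_iff, Finsupp.tsub_apply, sfVec_apply] at hj
  have hjF : j ∈ F := by by_contra hf; rw [if_neg hf] at hj; omega
  rw [if_pos hjF] at hj
  have hju : u j = 0 := by omega
  rcases Finset.mem_union.1 (h2 hjF) with hA | hZ
  · exact absurd hju (Finsupp.mem_support_iff.1 hA)
  · exact hZ

lemma iSupIndep_MSpan {ι : Type*} (E : ι → Set (Fin n →₀ ℕ))
    (h : ∀ i j, i ≠ j → ∀ a, a ∈ E i → a ∈ E j → False) :
    iSupIndep fun i => MSpan K (E i) := by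
  rw [iSupIndep_def]
  intro i
  rw [Submodule.disjoint_def]
  intro x hx1 hx2
  have hx2' : x ∈ MSpan K (⋃ (j : ι) (_ : j ≠ i), E j) := by
    refine (iSup₂_le fun j hj => Submodule.span_mono ?_) hx2
    rintro p ⟨a, ha, rfl⟩
    exact ⟨a, Set.mem_iUnion.2 ⟨j, Set.mem_iUnion.2 ⟨hj, ha⟩⟩, rfl⟩
  refine MvPolynomial.ext _ _ fun a => ?_
  rw [coeff_zero]
  by_contra hc
  have h1 := mem_MSpan.1 hx1 a hc
  have h2 := mem_MSpan.1 hx2' a hc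
  rcases Set.mem_iUnion.1 h2 with ⟨j, hj⟩
  rcases Set.mem_iUnion.1 hj with ⟨hji, haj⟩
  exact h j i hji a haj h1

lemma exists_squarefree_decomp {m : ℕ} (G : Fin m → Finset (Fin n))
    (I : Ideal (MvPolynomial (Fin n) K))
    (hI : I = Ideal.span (Set.range fun i => monomial (sfVec (G i)) (1 : K)))
    (D : StanleyDecomposition K I) :
    ∃ D' : StanleyDecomposition K I, D'.IsSquarefree ∧ D.sdepth ≤ D'.sdepth := by
  classical
  have hEI := restrictScalars_eq_MSpan G I hI
  have hU : EIset G = ⋃ i, SE (D.u i) (D.Z i) := by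
    have hms : MSpan K (EIset G) = MSpan K (⋃ i, SE (D.u i) (D.Z i)) := by
      rw [MSpan_iSup, ← hEI, D.isSup]
      exact iSup_congr fun i => StanleySpace_eq_MSpan _ _
    ext a
    rw [← monomial_mem_MSpan (K := K), hms, monomial_mem_MSpan]
  have hdisj : ∀ i j, i ≠ j → ∀ a, a ∈ SE (D.u i) (D.Z i) → a ∈ SE (D.u j) (D.Z j) → False := by
    intro i j hij a hai haj
    have h1 : monomial a (1:K) ∈ StanleySpace K (D.u i) (D.Z i) := by
      rw [StanleySpace_eq_MSpan]; exact monomial_mem_MSpan.2 hai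
    have h2 : monomial a (1:K) ∈
        ⨆ (k) (_ : k ≠ i), StanleySpace K (D.u k) (D.Z k) := by
      have hj2 : monomial a (1:K) ∈ StanleySpace K (D.u j) (D.Z j) := by
        rw [StanleySpace_eq_MSpan]; exact monomial_mem_MSpan.2 haj
      exact le_iSup₂ (f := fun k (_ : k ≠ i) => StanleySpace K (D.u k) (D.Z k)) j hij.symm hj2
    have := Submodule.disjoint_def.1 (iSupIndep_def.1 D.indep i) _ h1 h2
    exact one_ne_zero (monomial_eq_zero.1 this)
  have humem : ∀ i, D.u i ∈ EIset G := by
    intro i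
    have h0 : monomial (D.u i) (1:K) ∈ Submodule.restrictScalars K I := D.mem i
    rw [hEI] at h0
    exact monomial_mem_MSpan.1 h0
  set sq : Fin D.r → Prop := fun i => ∀ j, D.u i j ≤ 1 with hsqdef
  have cover : ∀ a ∈ EIset G, ∃ i, sq i ∧ (D.u i).support ⊆ a.support ∧
      a.support ⊆ (D.u i).support ∪ D.Z i := by
    intro a ha
    obtain ⟨k, hk⟩ := ha
    have hFa : sfVec a.support ∈ EIset G :=
      ⟨k, sfVec_le_iff.2 (by rw [support_sfVec]; exact sfVec_le_iff.1 hk)⟩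
    rw [hU] at hFa
    rcases Set.mem_iUnion.1 hFa with ⟨i, τ, hτ, heq⟩
    rw [Finset.coe_subset] at hτ
    refine ⟨i, ?_, ?_, ?_⟩
    · intro j
      have h1 : sfVec a.support j = D.u i j + τ j := by rw [heq, Finsupp.add_apply]
      have h2 : sfVec a.support j ≤ 1 := by rw [sfVec_apply]; split <;> omega
      omega
    · intro j hj
      have h1 : D.u i j ≠ 0 := Finsupp.mem_support_iff.1 hj
      have h2 : sfVec a.support j = D.u i j + τ j := by rw [heq, Finsupp.add_apply]
      by_contra hf
      rw [sfVec_apply, if_neg hf] at h2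
      omega
    · intro j hj
      have h2 : sfVec a.support j = D.u i j + τ j := by rw [heq, Finsupp.add_apply]
      rw [sfVec_apply, if_pos hj] at h2
      rw [Finset.mem_union]
      by_cases hu : D.u i j = 0
      · exact Or.inr (hτ (Finsupp.mem_support_iff.2 (by omega)))
      · exact Or.inl (Finsupp.mem_support_iff.2 hu)
  have disj' : ∀ i j : Fin D.r, sq i → sq j → i ≠ j → ∀ a : Fin n →₀ ℕ,
      ((D.u i).support ⊆ a.support ∧ a.support ⊆ (D.u i).support ∪ D.Z i) →
      ((D.u j).support ⊆ a.support ∧ a.support ⊆ (D.u j).support ∪ D.Z j) → False := by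
    intro i j hi hj hij a ⟨hi1, hi2⟩ ⟨hj1, hj2⟩
    exact hdisj i j hij (sfVec a.support)
      (sfVec_support_mem_SE hi hi1 hi2) (sfVec_support_mem_SE hj hj1 hj2)
  have hJne : Nonempty {i : Fin D.r // sq i} := by
    obtain ⟨i, hi, -, -⟩ := cover (D.u ⟨0, D.rpos⟩) (humem _)
    exact ⟨⟨i, hi⟩⟩
  set Jt := {i : Fin D.r // sq i}
  let e : Fin (Fintype.card Jt) ≃ Jt := (Fintype.equivFin Jt).symm
  let A : Jt → Finset (Fin n) := fun i => (D.u i.1).support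
  let u' : Fin (Fintype.card Jt) → (Fin n →₀ ℕ) := fun t => sfVec (A (e t))
  let Z' : Fin (Fintype.card Jt) → Finset (Fin n) := fun t => A (e t) ∪ D.Z (e t).1
  have hu'eq : ∀ t, u' t = D.u (e t).1 := fun t => sfVec_of_squarefree (e t).2
  have hmemSE : ∀ t a, a ∈ SE (u' t) (Z' t) ↔
      A (e t) ⊆ a.support ∧ a.support ⊆ A (e t) ∪ D.Z (e t).1 := by
    intro t a
    exact mem_SE_sfVec Finset.subset_union_left
  have hsetEq : EIset G = ⋃ t, SE (u' t) (Z' t) := by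
    ext a
    constructor
    · intro ha
      obtain ⟨i, hi, h1, h2⟩ := cover a ha
      refine Set.mem_iUnion.2 ⟨e.symm ⟨i, hi⟩, (hmemSE _ _).2 ?_⟩
      simp only [Equiv.apply_symm_apply]
      exact ⟨h1, h2⟩
    · intro ha
      rcases Set.mem_iUnion.1 ha with ⟨t, hut⟩
      obtain ⟨h1, h2⟩ := (hmemSE t a).1 hut
      obtain ⟨k, hk⟩ := humem (e t).1
      exact ⟨k, sfVec_le_iff.2 ((sfVec_le_iff.1 hk).trans h1)⟩
  refine ⟨{ r := Fintype.card Jt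
            rpos := Fintype.card_pos
            u := u'
            Z := Z'
            mem := fun t => by rw [hu'eq]; exact D.mem _
            isSup := by
              rw [hEI, hsetEq, MSpan_iSup]
              exact (iSup_congr fun t => StanleySpace_eq_MSpan _ _).symm
            indep := by
              have hfe : (fun t => StanleySpace K (u' t) (Z' t)) =
                  fun t => MSpan K (SE (u' t) (Z' t)) :=
                funext fun t => StanleySpace_eq_MSpan _ _
              rw [hfe]
              refine iSupIndep_MSpan _ ?_
              intro t s hts a hat has
              have hne : (e t).1 ≠ (e s).1 :=
                fun h => hts (e.injective (Subtype.ext h))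
              exact disj' (e t).1 (e s).1 (e t).2 (e s).2 hne a
                ((hmemSE t a).1 hat) ((hmemSE s a).1 has) }, ?_, ?_⟩
  · intro t
    constructor
    · intro j
      rw [sfVec_apply]
      split <;> omega
    · rw [support_sfVec]
      exact Finset.subset_union_left
  · show D.sdepth ≤ Finset.univ.inf' _ fun t => (Z' t).card
    refine Finset.le_inf' _ _ fun t _ => ?_
    calc D.sdepth ≤ (D.Z (e t).1).card :=
          Finset.inf'_le _ (Finset.mem_univ _)
    _ ≤ (Z' t).card := Finset.card_le_card Finset.subset_union_right

end Aux

/-- If `I ⊆ K[x₁,…,xₙ]` is a squarefree monomial ideal, then the Stanley depth of `I`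
is the maximum of `sdepth D` over the squarefree Stanley decompositions `D` of `I`. -/
theorem sdepth_eq_sup_squarefree (n : ℕ) (K : Type*) [Field K]
    (I : Ideal (MvPolynomial (Fin n) K))
    (m : ℕ) (G : Fin m → Finset (Fin n))
    (hI : I = Ideal.span (Set.range fun i => monomial (sfVec (G i)) (1 : K))) :
    Ideal.sdepth K I =
      sSup {k : ℕ | ∃ D : StanleyDecomposition K I, D.IsSquarefree ∧ D.sdepth = k} := by
  classical
  have hbdd : ∀ D : StanleyDecomposition K I, D.sdepth ≤ n := by
    intro D
    have h1 : D.sdepth ≤ (D.Z ⟨0, D.rpos⟩).card :=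
      Finset.inf'_le _ (Finset.mem_univ _)
    exact h1.trans (by simpa using Finset.card_le_univ (D.Z ⟨0, D.rpos⟩))
  have hbddS : BddAbove {k : ℕ | ∃ D : StanleyDecomposition K I,
      D.IsSquarefree ∧ D.sdepth = k} := by
    refine ⟨n, ?_⟩
    rintro k ⟨D, -, rfl⟩
    exact hbdd D
  have hbddR : BddAbove (Set.range fun D : StanleyDecomposition K I => D.sdepth) := by
    refine ⟨n, ?_⟩
    rintro k ⟨D, rfl⟩
    exact hbdd D
  apply le_antisymm
  · rw [Ideal.sdepth]
    by_cases hne : Nonempty (StanleyDecomposition K I)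
    · apply csSup_le (Set.range_nonempty _)
      rintro k ⟨D, rfl⟩
      obtain ⟨D', hsq, hle⟩ := exists_squarefree_decomp G I hI D
      exact hle.trans (le_csSup hbddS ⟨D', hsq, rfl⟩)
    · rw [Set.range_eq_empty_iff.2 (by simpa using hne), csSup_empty]
      exact bot_le
  · by_cases hS : {k : ℕ | ∃ D : StanleyDecomposition K I,
        D.IsSquarefree ∧ D.sdepth = k}.Nonempty
    · apply csSup_le hS
      rintro k ⟨D, -, rfl⟩
      exact le_csSup hbddR ⟨D, rfl⟩
    · rw [Set.not_nonempty_iff_eq_empty.1 hS, csSup_empty]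
      exact bot_le
end

section
/- Let v_1,…,v_m be monomials in K[x_2,…,x_n] (not involving x_1), let a be a positive integer, and set I = (x_1^a v_1, v_2,…,v_m) and I' = (x_1^{a+1} v_1, v_2,…,v_m). Let g ∈ ℕ^n with x^g = lcm(x_1^a v_1, v_2,…,v_m) (so g(1) = a) and g' = g + e_1. Suppose P_I^g = ⋃_{i=1}^r [c_i, d_i] is a partition of P_I^g into pairwise disjoint intervals. Define c'_i = c_i if c_i(1) < a and c'_i = c_i + e_1 if c_i(1) = a, and define d'_i = d_i if d_i(1) < a−1 and d'_i = d_i + e_1 if d_i(1) ≥ a−1. Then ⋃_{i=1}^r [c'_i, d'_i] is a partition of P_{I'}^{g'} into pairwise disjoint intervals, and ρ_{g'}(d'_i) = ρ_g(d_i) for all i ∈ [r]. -/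
/-- The set `P_I^g` of the characteristic poset of the monomial ideal
`I = (w₁, v_1, …, v_m)` (identifying monomials with their exponent vectors):
all `σ ≤ g` such that some generator divides `x^σ`. -/
def charPoset {n m : ℕ} (w₁ : Fin n → ℕ) (v : Fin m → Fin n → ℕ)
    (g : Fin n → ℕ) : Set (Fin n → ℕ) :=
  {σ | σ ≤ g ∧ (w₁ ≤ σ ∨ ∃ i, v i ≤ σ)}

/-- `ρ_g(d) = #{j : d j = g j}`. -/
def rho {n : ℕ} (g d : Fin n → ℕ) : ℕ :=
  (Finset.univ.filter fun j => d j = g j).card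

/-- Transfer of a partition of `P_I^g` to a partition of `P_{I'}^{g'}`, where
`I = (x₁^a v₁, v₂, …, v_m)`, `I' = (x₁^{a+1} v₁, v₂, …, v_m)`, `x^g = lcm` of the
generators of `I` and `g' = g + e₁`:  setting `c'ᵢ = cᵢ` if `cᵢ(1) < a`, `cᵢ + e₁`
if `cᵢ(1) = a`, and `d'ᵢ = dᵢ` if `dᵢ(1) < a - 1`, `dᵢ + e₁` if `dᵢ(1) ≥ a - 1`,
the intervals `[c'ᵢ, d'ᵢ]` partition `P_{I'}^{g'}` and `ρ_{g'}(d'ᵢ) = ρ_g(dᵢ)`. -/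
theorem partition_transfer_up (n : ℕ) (hn : 2 ≤ n)
    (m : ℕ) (v₁ : Fin n → ℕ) (v : Fin m → Fin n → ℕ)
    (hv₁ : v₁ ⟨0, by omega⟩ = 0) (hv : ∀ i, v i ⟨0, by omega⟩ = 0)
    (a : ℕ) (ha : 0 < a)
    (e₁ : Fin n → ℕ) (he₁ : e₁ = fun j => if j = (⟨0, by omega⟩ : Fin n) then 1 else 0)
    (g : Fin n → ℕ)
    (hg : ∀ j, g j = max ((a • e₁ + v₁) j) (Finset.univ.sup fun i => v i j))
    (r : ℕ) (c d : Fin r → (Fin n → ℕ))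
    (hcd : ∀ i, c i ≤ d i)
    (hcover : (⋃ i, Set.Icc (c i) (d i)) = charPoset (a • e₁ + v₁) v g)
    (hdisj : Pairwise (Function.onFun Disjoint fun i => Set.Icc (c i) (d i)))
    (c' d' : Fin r → (Fin n → ℕ))
    (hc' : ∀ i, c' i = if c i ⟨0, by omega⟩ < a then c i else c i + e₁)
    (hd' : ∀ i, d' i = if d i ⟨0, by omega⟩ < a - 1 then d i else d i + e₁) :
    (⋃ i, Set.Icc (c' i) (d' i)) = charPoset ((a + 1) • e₁ + v₁) v (g + e₁) ∧
    Pairwise (Function.onFun Disjoint fun i => Set.Icc (c' i) (d' i)) ∧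
    ∀ i, rho (g + e₁) (d' i) = rho g (d i) := by
  have hz0 : (0:ℕ) < n := by omega
  set z : Fin n := ⟨0, hz0⟩ with hzdef
  have he₁z : e₁ z = 1 := by rw [he₁]; simp
  have he₁j : ∀ j : Fin n, j ≠ z → e₁ j = 0 := by
    intro j hj; rw [he₁]; simp [hj]
  have hgz : g z = a := by
    have hsup : (Finset.univ.sup fun i => v i z) = 0 :=
      Nat.eq_zero_of_le_zero (Finset.sup_le fun i _ => le_of_eq (hv i))
    rw [hg z, hsup]
    simp [he₁z, hv₁]
  have hmemPd : ∀ i, d i ∈ charPoset (a • e₁ + v₁) v g := by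
    intro i
    rw [← hcover]
    exact Set.mem_iUnion.2 ⟨i, Set.mem_Icc.2 ⟨hcd i, le_refl _⟩⟩
  have hmemPc : ∀ i, c i ∈ charPoset (a • e₁ + v₁) v g := by
    intro i
    rw [← hcover]
    exact Set.mem_iUnion.2 ⟨i, Set.mem_Icc.2 ⟨le_refl _, hcd i⟩⟩
  have hcza : ∀ i, c i z ≤ a := fun i => hgz ▸ (hmemPc i).1 z
  have hdza : ∀ i, d i z ≤ a := fun i => hgz ▸ (hmemPd i).1 z
  set bar : (Fin n → ℕ) → Fin n → ℕ :=
    fun τ j => if j = z ∧ a ≤ τ z then τ z - 1 else τ j with hbar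
  have hbarz : ∀ τ : Fin n → ℕ, bar τ z = if a ≤ τ z then τ z - 1 else τ z := by
    intro τ; simp [hbar]
  have hbarj : ∀ (τ : Fin n → ℕ) (j : Fin n), j ≠ z → bar τ j = τ j := by
    intro τ j hj; simp [hbar, hj]
  have key : ∀ i (τ : Fin n → ℕ),
      τ ∈ Set.Icc (c' i) (d' i) ↔ bar τ ∈ Set.Icc (c i) (d i) := by
    intro i τ
    simp only [Set.mem_Icc, Pi.le_def, ← forall_and]
    refine forall_congr' fun j => ?_
    rcases eq_or_ne j z with hj | hj
    · subst hj
      have h1 := hcza i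
      have h2 : c i z ≤ d i z := hcd i z
      rw [hc' i, hd' i, hbarz]
      simp only [apply_ite (fun f : Fin n → ℕ => f z), Pi.add_apply, he₁z]
      split_ifs <;> omega
    · rw [hc' i, hd' i, hbarj τ j hj]
      simp only [apply_ite (fun f : Fin n → ℕ => f j), Pi.add_apply, he₁j j hj]
      split_ifs <;> simp
  have keyP : ∀ τ : Fin n → ℕ,
      τ ∈ charPoset ((a + 1) • e₁ + v₁) v (g + e₁) ↔
        bar τ ∈ charPoset (a • e₁ + v₁) v g := by
    intro τ
    simp only [charPoset, Set.mem_setOf_eq]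
    apply and_congr
    · simp only [Pi.le_def]
      refine forall_congr' fun j => ?_
      rcases eq_or_ne j z with hj | hj
      · subst hj
        rw [hbarz]
        simp only [Pi.add_apply, he₁z, hgz]
        split_ifs <;> omega
      · rw [hbarj τ j hj]
        simp [Pi.add_apply, he₁j j hj]
    · apply or_congr
      · simp only [Pi.le_def]
        refine forall_congr' fun j => ?_
        rcases eq_or_ne j z with hj | hj
        · subst hj
          rw [hbarz]
          simp only [Pi.add_apply, Pi.smul_apply, he₁z, hv₁, smul_eq_mul]
          split_ifs <;> omega
        · rw [hbarj τ j hj]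
          simp [Pi.add_apply, Pi.smul_apply, he₁j j hj]
      · apply exists_congr
        intro i
        simp only [Pi.le_def]
        refine forall_congr' fun j => ?_
        rcases eq_or_ne j z with hj | hj
        · subst hj; simp [hv i]
        · rw [hbarj τ j hj]
  refine ⟨?_, ?_, ?_⟩
  · ext τ
    simp only [Set.mem_iUnion, key]
    rw [← Set.mem_iUnion, hcover]
    exact (keyP τ).symm
  · intro i j hij
    have h := hdisj hij
    simp only [Function.onFun, Set.disjoint_left] at h ⊢
    intro τ h1 h2
    exact h ((key i τ).1 h1) ((key j τ).1 h2)
  · intro i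
    unfold rho
    congr 1
    apply Finset.filter_congr
    intro j _
    rcases eq_or_ne j z with hj | hj
    · subst hj
      have hdz := hdza i
      rw [hd' i]
      simp only [apply_ite (fun f : Fin n → ℕ => f z), Pi.add_apply, he₁z, hgz]
      split_ifs <;> omega
    · rw [hd' i]
      simp only [apply_ite (fun f : Fin n → ℕ => f j), Pi.add_apply, he₁j j hj, add_zero]
      split_ifs <;> rfl
end
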